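/- Let s ↦ A(s) be a continuous map from the extended real line into ℓ×ℓ matrices with ρ(A(s)) < c < 1 for all s. Then there exists N ∈ ℕ such that ‖A(s)^n‖ < 1/4 for all s ∈ ℝ and all n ≥ N. -/

import Mathlib

open Filter


noncomputable section Stmt8Aux

/-- The complexified continuous linear map of a real matrix. -/
noncomputable def cf (ℓ : ℕ) (M : Matrix (Fin ℓ) (Fin ℓ) ℝ) :
    EuclideanSpace ℂ (Fin ℓ) →L[ℂ] EuclideanSpace ℂ (Fin ℓ) :=
  Matrix.toEuclideanCLM (𝕜 := ℂ) (M.map Complex.ofReal)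

lemma cf_spectrum {ℓ : ℕ} (M : Matrix (Fin ℓ) (Fin ℓ) ℝ) :
    spectrum ℂ (cf ℓ M) = spectrum ℂ (M.map Complex.ofReal) :=
  AlgEquiv.spectrum_eq (Matrix.toEuclideanCLM (𝕜 := ℂ)) _

lemma cf_continuous {ℓ : ℕ} : Continuous (cf ℓ) := by
  have h1 : Continuous fun M : Matrix (Fin ℓ) (Fin ℓ) ℝ => M.map Complex.ofReal :=
    continuous_id.matrix_map Complex.continuous_ofReal
  have h2 : Continuous fun N : Matrix (Fin ℓ) (Fin ℓ) ℂ => Matrix.toEuclideanCLM (𝕜 := ℂ) N := by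
    have he : (fun N : Matrix (Fin ℓ) (Fin ℓ) ℂ => Matrix.toEuclideanCLM (𝕜 := ℂ) N)
        = ⇑((Matrix.toEuclideanLin.trans LinearMap.toContinuousLinearMap).toLinearMap) := by
      funext N
      apply ContinuousLinearMap.coe_injective
      exact Matrix.coe_toEuclideanCLM_eq_toEuclideanLin N
    rw [he]
    exact LinearMap.continuous_of_finiteDimensional _
  exact h2.comp h1

lemma norm_le_cf {ℓ : ℕ} (M : Matrix (Fin ℓ) (Fin ℓ) ℝ) :
    ‖Matrix.toEuclideanCLM (𝕜 := ℝ) M‖ ≤ ‖cf ℓ M‖ := by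
  refine ContinuousLinearMap.opNorm_le_bound _ (norm_nonneg _) fun x => ?_
  set v : Fin ℓ → ℝ := WithLp.equiv 2 _ x with hv
  set vc : Fin ℓ → ℂ := fun i => (v i : ℂ) with hvc
  set xc : EuclideanSpace ℂ (Fin ℓ) := (WithLp.equiv 2 _).symm vc with hxc
  have hnx : ‖xc‖ = ‖x‖ := by
    rw [EuclideanSpace.norm_eq, EuclideanSpace.norm_eq]
    congr 1
    refine Finset.sum_congr rfl fun i _ => ?_
    rw [show xc i = ((x i : ℝ) : ℂ) from rfl, Complex.norm_real]
  have hmv : (M.map Complex.ofReal).mulVec vc = fun i => ((M.mulVec v) i : ℂ) := by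
    funext i
    simp [Matrix.mulVec, dotProduct, Matrix.map_apply, hvc]
  have happ : Matrix.toEuclideanCLM (𝕜 := ℂ) (M.map Complex.ofReal) xc
      = (WithLp.equiv 2 _).symm (fun i => ((M.mulVec v) i : ℂ)) := by
    rw [hxc, ← hmv]; rfl
  have hax : Matrix.toEuclideanCLM (𝕜 := ℝ) M x =
      (WithLp.equiv 2 _).symm (M.mulVec v) := by
    conv_lhs => rw [← (WithLp.equiv 2 _).symm_apply_apply x]
    rfl
  have hn2 : ‖Matrix.toEuclideanCLM (𝕜 := ℝ) M x‖ = ‖cf ℓ M xc‖ := by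
    rw [cf, happ, hax, EuclideanSpace.norm_eq, EuclideanSpace.norm_eq]
    congr 1
    refine Finset.sum_congr rfl fun i _ => ?_
    rw [show ((WithLp.equiv 2 (Fin ℓ → ℂ)).symm (fun i => ((M.mulVec v) i : ℂ))) i
        = (((M.mulVec v) i : ℝ) : ℂ) from rfl,
      show ((WithLp.equiv 2 (Fin ℓ → ℝ)).symm (M.mulVec v)) i = (M.mulVec v) i from rfl,
      Complex.norm_real]
  rw [hn2, ← hnx]
  exact (cf ℓ M).le_opNorm xc

lemma exists_pow_norm_lt {𝔸 : Type*} [NormedRing 𝔸] [NormedAlgebra ℂ 𝔸] [CompleteSpace 𝔸]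
    (a : 𝔸) {c : ℝ} (hc : 0 < c) (h : ∀ μ ∈ spectrum ℂ a, ‖μ‖ < c) :
    ∃ m : ℕ, 1 ≤ m ∧ ‖a ^ m‖ < c ^ m := by
  have hrad : spectralRadius ℂ a < ENNReal.ofReal c := by
    rcases Set.eq_empty_or_nonempty (spectrum ℂ a) with he | hne
    · rw [spectralRadius, he]
      simpa using ENNReal.ofReal_pos.mpr hc
    · have h' : ∀ μ ∈ spectrum ℂ a, ‖μ‖₊ < c.toNNReal := fun μ hμ => by
        rw [← norm_toNNReal]
        exact Real.toNNReal_lt_toNNReal_iff'.mpr ⟨h μ hμ, hc⟩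
      simpa [ENNReal.ofReal] using
        spectrum.spectralRadius_lt_of_forall_lt_of_nonempty hne h'
  have hGel := spectrum.pow_nnnorm_pow_one_div_tendsto_nhds_spectralRadius a
  have hev : ∀ᶠ m : ℕ in atTop, ((‖a ^ m‖₊ : ENNReal) ^ (1 / (m : ℝ))) < ENNReal.ofReal c :=
    hGel.eventually_lt_const hrad
  obtain ⟨m, hm1, hm⟩ := (hev.and (eventually_ge_atTop 1)).exists
  refine ⟨m, hm, ?_⟩
  have hm0 : (m : ℝ) ≠ 0 := by exact_mod_cast Nat.one_le_iff_ne_zero.mp hm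
  have key : ((‖a ^ m‖₊ : ENNReal)) < (ENNReal.ofReal c) ^ (m : ℝ) := by
    have := ENNReal.rpow_lt_rpow hm1 (by positivity : (0:ℝ) < (m:ℝ))
    rwa [← ENNReal.rpow_mul, one_div, inv_mul_cancel₀ hm0, ENNReal.rpow_one] at this
  have hco : (ENNReal.ofReal c) ^ (m : ℝ) = ENNReal.ofReal (c ^ m) := by
    rw [ENNReal.ofReal_rpow_of_pos hc, Real.rpow_natCast]
  rw [hco, ← ENNReal.ofReal_coe_nnreal, coe_nnnorm,
    ENNReal.ofReal_lt_ofReal_iff (by positivity)] at key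
  exact key

lemma pow_norm_bound {E : Type*} [NormedRing E] {T : E} {c C : ℝ} {m M : ℕ}
    (hc : 0 < c) (hcC : c ≤ C) (h1 : ‖(1 : E)‖ ≤ 1) (hC1 : 1 ≤ C)
    (hm1 : 1 ≤ m) (hmM : m ≤ M) (hTC : ‖T‖ ≤ C) (hTm : ‖T ^ m‖ ≤ c ^ m) (n : ℕ) :
    ‖T ^ n‖ ≤ (C / c) ^ M * c ^ n := by
  have hm0 : 0 < m := hm1
  set q := n / m with hqdef
  set r := n % m with hrdef
  have hrm : r < m := Nat.mod_lt _ hm0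
  have hn : m * q + r = n := Nat.div_add_mod n m
  have hq : T ^ n = (T ^ m) ^ q * T ^ r := by rw [← pow_mul, ← pow_add, hn]
  have hb1 : ‖(T ^ m) ^ q‖ ≤ (c ^ m) ^ q := by
    rcases Nat.eq_zero_or_pos q with h | h
    · simpa [h] using h1
    · exact (norm_pow_le' _ h).trans (pow_le_pow_left₀ (norm_nonneg _) hTm q)
  have hb2 : ‖T ^ r‖ ≤ C ^ r := by
    rcases Nat.eq_zero_or_pos r with h | h
    · simpa [h] using h1
    · exact (norm_pow_le' _ h).trans (pow_le_pow_left₀ (norm_nonneg _) hTC r)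
  have hcr : (c : ℝ) ^ r ≠ 0 := by positivity
  calc ‖T ^ n‖ ≤ (c ^ m) ^ q * C ^ r := by
        rw [hq]
        exact (norm_mul_le _ _).trans
          (mul_le_mul hb1 hb2 (norm_nonneg _) (by positivity))
    _ = c ^ n * (C / c) ^ r := by
        rw [div_pow, ← pow_mul, ← hn, pow_add]
        field_simp
    _ ≤ c ^ n * (C / c) ^ M := by
        have hCc1 : 1 ≤ C / c := (one_le_div hc).mpr hcC
        have : (C / c) ^ r ≤ (C / c) ^ M :=
          pow_le_pow_right₀ hCc1 (le_trans hrm.le hmM)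
        exact mul_le_mul_of_nonneg_left this (by positivity)
    _ = (C / c) ^ M * c ^ n := mul_comm _ _

end Stmt8Aux

set_option synthInstance.maxHeartbeats 1000000
set_option maxHeartbeats 2000000

/-- Corollary 3.5: if `s ↦ A(s)` is continuous on the extended real
line (i.e. continuous on `ℝ` with matrix limits `A₋, A₊` at `∓∞`) and every value has
all complex eigenvalues of modulus `< c` (with `c ∈ (0,1)`), then there is `N ∈ ℕ`
such that `‖A(s)^n‖ < 1/4` for all `s ∈ ℝ` and `n ≥ N`. -/
theorem stmt8 (ℓ : ℕ) (A : ℝ → Matrix (Fin ℓ) (Fin ℓ) ℝ) (hA : Continuous A)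
    (Ap Am : Matrix (Fin ℓ) (Fin ℓ) ℝ)
    (hAp : Tendsto A atTop (nhds Ap)) (hAm : Tendsto A atBot (nhds Am))
    (c : ℝ) (hc0 : 0 < c) (hc1 : c < 1)
    (hspec : ∀ s : ℝ, ∀ μ ∈ spectrum ℂ ((A s).map Complex.ofReal), ‖μ‖ < c)
    (hspecp : ∀ μ ∈ spectrum ℂ (Ap.map Complex.ofReal), ‖μ‖ < c)
    (hspecm : ∀ μ ∈ spectrum ℂ (Am.map Complex.ofReal), ‖μ‖ < c) :
    ∃ N : ℕ, ∀ (s : ℝ) (n : ℕ), N ≤ n →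
      ‖(Matrix.toEuclideanCLM (𝕜 := ℝ) (A s)) ^ n‖ < 1 / 4 := by
  classical
  set f : ℝ → (EuclideanSpace ℂ (Fin ℓ) →L[ℂ] EuclideanSpace ℂ (Fin ℓ)) :=
    fun s => cf ℓ (A s) with hf
  have hfc : Continuous f := cf_continuous.comp hA
  have hfp : Tendsto f atTop (nhds (cf ℓ Ap)) := (cf_continuous.tendsto Ap).comp hAp
  have hfm : Tendsto f atBot (nhds (cf ℓ Am)) := (cf_continuous.tendsto Am).comp hAm
  have hs : ∀ s, ∀ μ ∈ spectrum ℂ (f s), ‖μ‖ < c := fun s μ hμ =>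
    hspec s μ (by rwa [hf, cf_spectrum] at hμ)
  -- behavior at the two ends
  obtain ⟨mp, hmp1, hmp⟩ := exists_pow_norm_lt (cf ℓ Ap) hc0
    (fun μ hμ => hspecp μ (by rwa [cf_spectrum] at hμ))
  obtain ⟨mm, hmm1, hmm⟩ := exists_pow_norm_lt (cf ℓ Am) hc0
    (fun μ hμ => hspecm μ (by rwa [cf_spectrum] at hμ))
  have hevp : ∀ᶠ s in atTop, ‖(f s) ^ mp‖ < c ^ mp := by
    have ht : Tendsto (fun s => ‖(f s) ^ mp‖) atTop (nhds ‖(cf ℓ Ap) ^ mp‖) :=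
      ((continuous_norm.comp (continuous_pow mp)).tendsto _).comp hfp
    exact ht.eventually_lt_const hmp
  have hevm : ∀ᶠ s in atBot, ‖(f s) ^ mm‖ < c ^ mm := by
    have ht : Tendsto (fun s => ‖(f s) ^ mm‖) atBot (nhds ‖(cf ℓ Am) ^ mm‖) :=
      ((continuous_norm.comp (continuous_pow mm)).tendsto _).comp hfm
    exact ht.eventually_lt_const hmm
  obtain ⟨R1, hR1⟩ := eventually_atTop.mp hevp
  obtain ⟨R2, hR2⟩ := eventually_atBot.mp hevm
  -- compact middle part
  set U : ℕ → Set ℝ := fun m => {t | ‖(f t) ^ (m + 1)‖ < c ^ (m + 1)} with hU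
  have hUopen : ∀ m, IsOpen (U m) := fun m =>
    isOpen_lt (continuous_norm.comp ((continuous_pow (m + 1)).comp hfc)) continuous_const
  have hcover : Set.Icc R2 R1 ⊆ ⋃ m, U m := by
    intro s _
    obtain ⟨m, hm1, hm⟩ := exists_pow_norm_lt (f s) hc0 (hs s)
    obtain ⟨k, rfl⟩ := Nat.exists_eq_add_of_le hm1
    exact Set.mem_iUnion.mpr ⟨k, by simpa [hU, Nat.add_comm] using hm⟩
  obtain ⟨t, ht⟩ := isCompact_Icc.elim_finite_subcover U hUopen hcover
  set Mbig : ℕ := max (max mp mm) (t.sup id + 1) with hMbig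
  -- a uniform bound C on ‖f s‖
  have hCp : ∀ᶠ s in atTop, ‖f s‖ ≤ ‖cf ℓ Ap‖ + 1 :=
    (hfp.norm).eventually_le_const (lt_add_one _)
  have hCm : ∀ᶠ s in atBot, ‖f s‖ ≤ ‖cf ℓ Am‖ + 1 :=
    (hfm.norm).eventually_le_const (lt_add_one _)
  obtain ⟨S1, hS1⟩ := eventually_atTop.mp hCp
  obtain ⟨S2, hS2⟩ := eventually_atBot.mp hCm
  obtain ⟨C0, hC0⟩ := (isCompact_Icc (a := S2) (b := S1)).exists_bound_of_continuousOn
    hfc.continuousOn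
  set C : ℝ := max (max (‖cf ℓ Ap‖ + 1) (‖cf ℓ Am‖ + 1)) (max C0 (max 1 c)) with hC
  have hC1 : (1 : ℝ) ≤ C := le_trans (le_max_left 1 c) (le_trans (le_max_right C0 _)
    (le_max_right _ _))
  have hcC : c ≤ C := le_trans (le_max_right 1 c) (le_trans (le_max_right C0 _)
    (le_max_right _ _))
  have hfC : ∀ s, ‖f s‖ ≤ C := by
    intro s
    by_cases h2 : s ≤ S2
    · exact le_trans (hS2 s h2) (le_trans (le_max_right _ _) (le_max_left _ _))
    · by_cases h1 : S1 ≤ s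
      · exact le_trans (hS1 s h1) (le_trans (le_max_left _ _) (le_max_left _ _))
      · have : s ∈ Set.Icc S2 S1 := ⟨le_of_not_ge h2, le_of_not_ge h1⟩
        exact le_trans (hC0 s this) (le_trans (le_max_left C0 _) (le_max_right _ _))
  -- key pointwise property with bounded exponent
  have hkey : ∀ s : ℝ, ∃ m : ℕ, 1 ≤ m ∧ m ≤ Mbig ∧ ‖(f s) ^ m‖ ≤ c ^ m := by
    intro s
    by_cases h2 : s ≤ R2
    · exact ⟨mm, hmm1, le_trans (le_max_right mp mm) (le_max_left _ _), (hR2 s h2).le⟩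
    · by_cases h1 : R1 ≤ s
      · exact ⟨mp, hmp1, le_trans (le_max_left mp mm) (le_max_left _ _), (hR1 s h1).le⟩
      · have hsK : s ∈ Set.Icc R2 R1 := ⟨le_of_not_ge h2, le_of_not_ge h1⟩
        obtain ⟨m, hmt, hsm⟩ := Set.mem_iUnion₂.mp (ht hsK)
        refine ⟨m + 1, Nat.succ_le_succ (Nat.zero_le m), ?_, (hsm : _ < _).le⟩
        exact le_trans (Nat.succ_le_succ (Finset.le_sup (f := id) hmt)) (le_max_right _ _)
  -- choose N
  set κ : ℝ := (C / c) ^ Mbig with hκ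
  have hκ0 : 0 < κ := by positivity
  have hlim : Tendsto (fun n : ℕ => κ * c ^ n) atTop (nhds 0) := by
    have := (tendsto_pow_atTop_nhds_zero_of_lt_one hc0.le hc1).const_mul κ
    simpa using this
  obtain ⟨N, hN⟩ := (hlim.eventually_lt_const (by norm_num : (0:ℝ) < 1/4)).exists
  refine ⟨N, fun s n hn => ?_⟩
  obtain ⟨m, hm1, hmM, hms⟩ := hkey s
  have h1CLM : ‖(1 : EuclideanSpace ℂ (Fin ℓ) →L[ℂ] EuclideanSpace ℂ (Fin ℓ))‖ ≤ 1 := by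
    rw [ContinuousLinearMap.one_def]
    exact ContinuousLinearMap.norm_id_le
  have hbnd : ‖(f s) ^ n‖ ≤ κ * c ^ n :=
    pow_norm_bound hc0 hcC h1CLM hC1 hm1 hmM (hfC s) hms n
  have hcmp : ‖(Matrix.toEuclideanCLM (𝕜 := ℝ) (A s)) ^ n‖ ≤ ‖(f s) ^ n‖ := by
    rw [← map_pow]
    refine le_trans (norm_le_cf ((A s) ^ n)) (le_of_eq ?_)
    congr 1
    rw [hf]
    simp only [cf]
    rw [← map_pow]
    congr 1
    have := map_pow (Complex.ofRealHom.mapMatrix : Matrix (Fin ℓ) (Fin ℓ) ℝ →+* Matrix (Fin ℓ) (Fin ℓ) ℂ) (A s) n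
    exact this
  have hmono : c ^ n ≤ c ^ N := pow_le_pow_of_le_one hc0.le hc1.le hn
  calc ‖(Matrix.toEuclideanCLM (𝕜 := ℝ) (A s)) ^ n‖ ≤ κ * c ^ n := le_trans hcmp hbnd
    _ ≤ κ * c ^ N := mul_le_mul_of_nonneg_left hmono hκ0.le
    _ < 1 / 4 := hN
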